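/- If 0 < h < 1/(s·c·c₃), then for every t ∈ ℝ, every Z ∈ ℝ^d and every family of drift stage values H⁽⁰⁾₁, …, H⁽⁰⁾_s with data (Z, t, h), one has max_{1≤i≤s} ‖H⁽⁰⁾_i − Z‖ ≤ s·c₃·c·(1 + ‖Z‖)·h / (1 − s·c₃·c·h). (Estimate (46) for the increments of the drift stages of the SRK method.) -/
import Mathlib


/-- Estimate (46): bound on the increments of the drift stages of the SRK method. -/
theorem stmt_14 (s d : ℕ) (hs : 0 < s) (hd : 0 < d) (c c₃ : ℝ) (hc : 0 < c) (hc₃ : 0 < c₃)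
    (a : ℝ → EuclideanSpace ℝ (Fin d) → EuclideanSpace ℝ (Fin d))
    (ha : ∀ t x, ‖a t x‖ ≤ c * (1 + ‖x‖))
    (A0 : Fin s → Fin s → ℝ) (hA0 : ∀ i j, |A0 i j| ≤ c₃)
    (c0 : Fin s → ℝ) (hc0 : ∀ j, |c0 j| ≤ c₃)
    (h : ℝ) (hh : 0 < h) (hh' : h < 1 / ((s : ℝ) * c * c₃))
    (t : ℝ) (Z : EuclideanSpace ℝ (Fin d))
    (H0 : Fin s → EuclideanSpace ℝ (Fin d))
    (hH0 : ∀ i, H0 i = Z + h • ∑ j, A0 i j • a (t + c0 j * h) (H0 j)) :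
    ∀ i, ‖H0 i - Z‖ ≤ (s : ℝ) * c₃ * c * (1 + ‖Z‖) * h / (1 - (s : ℝ) * c₃ * c * h) := by
  have hspos : (0:ℝ) < (s:ℝ) := by exact_mod_cast hs
  set α : ℝ := (s:ℝ) * c₃ * c * h with hα
  have hαpos : 0 < α := by positivity
  have hα1 : α < 1 := by
    have hprod : 0 < (s:ℝ) * c * c₃ := by positivity
    have := (lt_div_iff₀ hprod).mp hh'
    nlinarith
  obtain ⟨i₀, -, hi₀⟩ := Finset.exists_max_image (Finset.univ : Finset (Fin s))
    (fun i => ‖H0 i - Z‖) ⟨⟨0, hs⟩, Finset.mem_univ _⟩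
  set M : ℝ := ‖H0 i₀ - Z‖ with hM
  have hMnn : 0 ≤ M := norm_nonneg _
  have key : ∀ i, ‖H0 i - Z‖ ≤ α * (1 + ‖Z‖ + M) := by
    intro i
    have hdiff : H0 i - Z = h • ∑ j, A0 i j • a (t + c0 j * h) (H0 j) := by
      rw [hH0 i]; abel
    rw [hdiff, norm_smul, Real.norm_eq_abs, abs_of_pos hh]
    have hsum : ‖∑ j, A0 i j • a (t + c0 j * h) (H0 j)‖
        ≤ ∑ _j : Fin s, c₃ * (c * (1 + ‖Z‖ + M)) := by
      refine (norm_sum_le _ _).trans (Finset.sum_le_sum fun j _ => ?_)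
      rw [norm_smul, Real.norm_eq_abs]
      have h1 : ‖a (t + c0 j * h) (H0 j)‖ ≤ c * (1 + ‖Z‖ + M) := by
        refine (ha _ _).trans ?_
        have h2 : ‖H0 j‖ ≤ ‖Z‖ + M := by
          have := hi₀ j (Finset.mem_univ j)
          calc ‖H0 j‖ = ‖Z + (H0 j - Z)‖ := by rw [add_sub_cancel]
            _ ≤ ‖Z‖ + ‖H0 j - Z‖ := norm_add_le _ _
            _ ≤ ‖Z‖ + M := by linarith
        nlinarith
      exact mul_le_mul (hA0 i j) h1 (norm_nonneg _) hc₃.le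
    rw [Finset.sum_const, Finset.card_univ, Fintype.card_fin, nsmul_eq_mul] at hsum
    calc h * ‖∑ j, A0 i j • a (t + c0 j * h) (H0 j)‖
        ≤ h * ((s:ℝ) * (c₃ * (c * (1 + ‖Z‖ + M)))) :=
          mul_le_mul_of_nonneg_left hsum hh.le
      _ = α * (1 + ‖Z‖ + M) := by rw [hα]; ring
  have hMle : M ≤ α * (1 + ‖Z‖) / (1 - α) := by
    rw [le_div_iff₀ (by linarith)]
    nlinarith [key i₀]
  intro i
  have h2 := (hi₀ i (Finset.mem_univ i)).trans hMle
  calc ‖H0 i - Z‖ ≤ α * (1 + ‖Z‖) / (1 - α) := h2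
    _ = (s:ℝ) * c₃ * c * (1 + ‖Z‖) * h / (1 - (s:ℝ) * c₃ * c * h) := by rw [hα]; ring
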